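/- arXiv:1503.08008 — 3 statements merged into one kernel-verified Lean document; each statement's English description precedes it below -/
import Mathlib

section
/- For any probability vector λ ∈ Δ_{nk} (with n, k ≥ 2) whose largest entry λ₁ satisfies λ₁ ≤ (k+1)·λ_{nk}, where λ_{nk} is the smallest entry, and for any vector x ∈ Δ_{min(n,k)} with associated 'hat' vector x̂ ∈ ℝ^{nk}, one has ⟨λ^↓, x̂^↑⟩ ≥ 0, where λ^↓ is λ sorted decreasingly and x̂^↑ is x̂ sorted increasingly. -/
/-- For a probability vector `lam ∈ Δ_{nk}` (sorted decreasingly) with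
`λ₁ ≤ (k+1)·λ_{nk}`, and any `x ∈ Δ_{min(n,k)}` of rank `r` with hat vector data `η`,
the inner product `⟨λ^↓, x̂^↑⟩ ≥ 0`. The inner product is written out blockwise. -/
theorem stmt0 (n k r : ℕ) (hn : 2 ≤ n) (hk : 2 ≤ k)
    (hr1 : 1 ≤ r) (hrm : r ≤ min n k)
    (lam : ℕ → ℝ)
    (hlam_mono : ∀ i j, i ≤ j → j < n * k → lam j ≤ lam i)
    (hlam_nonneg : ∀ i, i < n * k → 0 ≤ lam i)
    (hlam_sum : ∑ i ∈ Finset.range (n * k), lam i = 1)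
    (hcond : lam 0 ≤ (k + 1) * lam (n * k - 1))
    (x : ℕ → ℝ)
    (hx_mono : ∀ i j, i ≤ j → j < r → x j ≤ x i)
    (hx_pos : ∀ i, i < r → 0 < x i)
    (hx_sum : ∑ i ∈ Finset.range r, x i = 1)
    (η : ℕ → ℝ)
    (hη_inter : ∀ i, i + 1 < r → x (i + 1) ≤ η i ∧ η i ≤ x i)
    (hη_last : η (r - 1) = -∑ i ∈ Finset.range (r - 1), η i)
    (hη_bound : -η (r - 1) ≤ (1 - 1 / (r : ℝ)) * ∑ i ∈ Finset.range r, x i) :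
    0 ≤ (∑ j ∈ Finset.range r,
          x j * ∑ i ∈ Finset.range (k - 1), lam ((n - 1 - j) * k + 1 + i))
        + (∑ j ∈ Finset.range (r - 1), η j * lam ((n - 1 - j) * k))
        + η (r - 1) * lam 0 := by
  have hnk : 4 ≤ n * k := le_trans (by norm_num) (Nat.mul_le_mul hn hk)
  have hrn : r ≤ n := le_trans hrm (min_le_left _ _)
  have hrk : r ≤ k := le_trans hrm (min_le_right _ _)
  set m := lam (n * k - 1) with hm
  set L := lam 0 with hL
  have hm0 : 0 ≤ m := hlam_nonneg _ (by omega)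
  have hmem : ∀ idx, idx < n * k → m ≤ lam idx ∧ lam idx ≤ L := by
    intro idx hidx
    exact ⟨hlam_mono idx (n * k - 1) (by omega) (by omega),
           hlam_mono 0 idx (Nat.zero_le _) hidx⟩
  have hmL : m ≤ L := (hmem 0 (by omega)).1.trans (hmem 0 (by omega)).2
  have hmulnk : (n - 1) * k + k = n * k := by
    have : (n - 1) * k + k = (n - 1 + 1) * k := by ring
    rw [this, Nat.sub_add_cancel (by omega)]
  have hidx1 : ∀ j, j < r → ∀ i, i < k - 1 → (n - 1 - j) * k + 1 + i < n * k := by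
    intro j hj i hi
    have h1 : (n - 1 - j) * k ≤ (n - 1) * k := Nat.mul_le_mul_right k (by omega)
    omega
  have hidx2 : ∀ j, j < r - 1 → (n - 1 - j) * k < n * k := by
    intro j hj
    have h1 : (n - 1 - j) * k ≤ (n - 1) * k := Nat.mul_le_mul_right k (by omega)
    omega
  -- bound for the first sum
  have hA : ((k : ℝ) - 1) * m ≤ ∑ j ∈ Finset.range r,
      x j * ∑ i ∈ Finset.range (k - 1), lam ((n - 1 - j) * k + 1 + i) := by
    calc ((k : ℝ) - 1) * m = ∑ j ∈ Finset.range r, x j * (((k : ℝ) - 1) * m) := by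
          rw [← Finset.sum_mul, hx_sum, one_mul]
    _ ≤ _ := by
        apply Finset.sum_le_sum
        intro j hj
        have hj' := Finset.mem_range.mp hj
        apply mul_le_mul_of_nonneg_left _ (hx_pos j hj').le
        have heq : ((k : ℝ) - 1) * m = ∑ i ∈ Finset.range (k - 1), m := by
          rw [Finset.sum_const, Finset.card_range, nsmul_eq_mul]
          have : ((k - 1 : ℕ) : ℝ) = (k : ℝ) - 1 := by
            push_cast [Nat.cast_sub (by omega : 1 ≤ k)]; ring
          rw [this]
        rw [heq]
        apply Finset.sum_le_sum
        intro i hi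
        exact (hmem _ (hidx1 j hj' i (Finset.mem_range.mp hi))).1
  -- bound for the eta part
  have hηnn : ∀ j ∈ Finset.range (r - 1), 0 ≤ η j := by
    intro j hj
    have hj' := Finset.mem_range.mp hj
    exact le_trans (hx_pos (j + 1) (by omega)).le (hη_inter j (by omega)).1
  have ht : ∑ j ∈ Finset.range (r - 1), η j = -η (r - 1) := by rw [hη_last]; ring
  have hrpos : (0 : ℝ) < (r : ℝ) := by positivity
  have hr0 : 0 ≤ 1 - 1 / (r : ℝ) := by
    have : 1 / (r : ℝ) ≤ 1 := by
      rw [div_le_one hrpos]; exact_mod_cast hr1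
    linarith
  have htub : -η (r - 1) ≤ 1 - 1 / (r : ℝ) := by
    have := hη_bound; rw [hx_sum, mul_one] at this; exact this
  have hB : (1 - 1 / (r : ℝ)) * (m - L) ≤
      (∑ j ∈ Finset.range (r - 1), η j * lam ((n - 1 - j) * k)) + η (r - 1) * L := by
    have step1 : (∑ j ∈ Finset.range (r - 1), η j) * (m - L) ≤
        ∑ j ∈ Finset.range (r - 1), η j * (lam ((n - 1 - j) * k) - L) := by
      rw [Finset.sum_mul]
      apply Finset.sum_le_sum
      intro j hj
      have hlow := (hmem _ (hidx2 j (Finset.mem_range.mp hj))).1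
      exact mul_le_mul_of_nonneg_left (by linarith) (hηnn j hj)
    have expand : (∑ j ∈ Finset.range (r - 1), η j * (lam ((n - 1 - j) * k) - L)) =
        (∑ j ∈ Finset.range (r - 1), η j * lam ((n - 1 - j) * k)) + η (r - 1) * L := by
      simp only [mul_sub]
      rw [Finset.sum_sub_distrib, ← Finset.sum_mul, ht]
      ring
    have step0 : (1 - 1 / (r : ℝ)) * (m - L) ≤
        (∑ j ∈ Finset.range (r - 1), η j) * (m - L) := by
      rw [ht]
      exact mul_le_mul_of_nonpos_right htub (by linarith)
    linarith [step1.trans_eq expand]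
  -- final combination
  have hkr : (r : ℝ) ≤ (k : ℝ) := by exact_mod_cast hrk
  have hkr1 : (1 : ℝ) ≤ (k : ℝ) / (r : ℝ) := (one_le_div hrpos).mpr hkr
  have final : 0 ≤ ((k : ℝ) - 1) * m + (1 - 1 / (r : ℝ)) * (m - L) := by
    have h1 : m - ((k : ℝ) + 1) * m ≤ m - L := by linarith [hcond]
    have h2 : (1 - 1 / (r : ℝ)) * (m - ((k : ℝ) + 1) * m) ≤
        (1 - 1 / (r : ℝ)) * (m - L) := mul_le_mul_of_nonneg_left h1 hr0
    have h3 : ((k : ℝ) - 1) * m + (1 - 1 / (r : ℝ)) * (m - ((k : ℝ) + 1) * m) =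
        m * ((k : ℝ) / (r : ℝ) - 1) := by field_simp; ring
    nlinarith [mul_nonneg hm0 (sub_nonneg.mpr hkr1)]
  linarith [hA, hB, final]
end

section
/- For n, k ≥ 2 and a probability vector λ ∈ Δ_{nk}: if the number of nonzero entries of λ satisfies rk λ ≤ (n−2)k+1, then λ does not belong to ARED_{n,k}, i.e., there exists x ∈ Δ_{min(n,k)} with ⟨λ^↓, x̂^↑⟩ < 0. Equivalently, every λ ∈ ARED_{n,k} satisfies rk λ ≥ (n−2)k+2. -/
/-- If a probability vector `lam ∈ Δ_{nk}` (sorted decreasingly) has at most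
`(n−2)k+1` nonzero entries, then `lam ∉ ARED_{n,k}`: the witness `x = (1/2,1/2,0,…,0)`,
whose hat vector has `2k−1` entries `1/2`, `(n−2)k` zeros and one entry `−1/2`,
yields `⟨λ^↓, x̂^↑⟩ < 0`. -/
theorem stmt2 (n k : ℕ) (hn : 2 ≤ n) (hk : 2 ≤ k)
    (lam : ℕ → ℝ)
    (hlam_mono : ∀ i j, i ≤ j → j < n * k → lam j ≤ lam i)
    (hlam_nonneg : ∀ i, i < n * k → 0 ≤ lam i)
    (hlam_sum : ∑ i ∈ Finset.range (n * k), lam i = 1)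
    (hrk : ((Finset.range (n * k)).filter (fun i => lam i ≠ 0)).card ≤ (n - 2) * k + 1) :
    ¬ (0 ≤ (-(1 / 2)) * lam 0
        + (1 / 2) * ∑ i ∈ Finset.Ico ((n - 2) * k + 1) (n * k), lam i) := by
  set m := (n - 2) * k + 1 with hm
  have hkey : n - 2 + 2 = n := Nat.sub_add_cancel hn
  have hmle : m ≤ n * k := by
    have h1 : (n - 2) * k + 2 * k = n * k := by
      rw [← Nat.add_mul, hkey]
    omega
  -- all entries with index ≥ m are zero
  have hzero : ∀ i, m ≤ i → i < n * k → lam i = 0 := by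
    intro i hi hilt
    by_contra hne
    have hpos : 0 < lam i := lt_of_le_of_ne (hlam_nonneg i hilt) (Ne.symm hne)
    have hsub : Finset.range (i + 1) ⊆
        (Finset.range (n * k)).filter (fun j => lam j ≠ 0) := by
      intro j hj
      simp only [Finset.mem_range, Finset.mem_filter] at *
      refine ⟨by omega, ?_⟩
      have : lam i ≤ lam j := hlam_mono j i (by omega) hilt
      intro hj0
      rw [hj0] at this
      linarith
    have := Finset.card_le_card hsub
    simp only [Finset.card_range] at this
    omega
  have hsum0 : ∑ i ∈ Finset.Ico m (n * k), lam i = 0 := by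
    apply Finset.sum_eq_zero
    intro i hi
    rw [Finset.mem_Ico] at hi
    exact hzero i hi.1 hi.2
  have hlam0 : 0 < lam 0 := by
    by_contra h
    push_neg at h
    have h0 : lam 0 = 0 := le_antisymm h (hlam_nonneg 0 (by nlinarith))
    have : ∑ i ∈ Finset.range (n * k), lam i = 0 := by
      apply Finset.sum_eq_zero
      intro i hi
      rw [Finset.mem_range] at hi
      have h1 := hlam_mono 0 i (Nat.zero_le i) hi
      have h2 := hlam_nonneg i hi
      linarith [h0 ▸ h1]
    rw [this] at hlam_sum
    norm_num at hlam_sum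
  rw [hsum0]
  intro h
  nlinarith
end

section
/- Let λ ∈ Δ_{nk} be sorted decreasingly (n, k ≥ 2, r = min(n,k) ≥ 2), and x ∈ Δ_r sorted decreasingly with rank r, with hat vector x̂ as in the hat operation (η_i satisfying x_i ≥ η_i ≥ x_{i+1}, η_r = −∑_{i<r}η_i ≥ −(1 − 1/r)). Then ⟨λ^↓, x̂^↑⟩ ≥ (k−1)·λ_{nk} + η_r·(λ₁ − λ_{nk}) ≥ ((k−1)/k)·((k+1)λ_{nk} − λ₁). -/
/-- For a decreasingly sorted probability vector `lam ∈ Δ_{nk}` and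
`x ∈ Δ_r` (`r = min(n,k) ≥ 2`) sorted decreasingly of rank `r`, with hat data `η`
(`x_{i+1} ≤ η_i ≤ x_i`, `η_r = −∑_{i<r} η_i ≥ −(1 − 1/r)`), the blockwise inner product
`⟨λ^↓, x̂^↑⟩ = ∑_j x_j·(λ_{(n−j+1)k}+⋯+λ_{(n−j)k+2}) + ∑_{j<r} η_j·λ_{(n−j)k+1} + η_r·λ₁`
satisfies `⟨λ^↓, x̂^↑⟩ ≥ (k−1)·λ_{nk} + η_r·(λ₁ − λ_{nk}) ≥ ((k−1)/k)·((k+1)λ_{nk} − λ₁)`. -/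
theorem stmt18 (n k : ℕ) (hn : 2 ≤ n) (hk : 2 ≤ k)
    (r : ℕ) (hr : r = min n k) (hr2 : 2 ≤ r)
    (lam : ℕ → ℝ)
    (hlam_mono : ∀ i j, i ≤ j → j < n * k → lam j ≤ lam i)
    (hlam_nonneg : ∀ i, i < n * k → 0 ≤ lam i)
    (hlam_sum : ∑ i ∈ Finset.range (n * k), lam i = 1)
    (x : ℕ → ℝ)
    (hx_mono : ∀ i j, i ≤ j → j < r → x j ≤ x i)
    (hx_pos : ∀ i, i < r → 0 < x i)
    (hx_sum : ∑ i ∈ Finset.range r, x i = 1)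
    (η : ℕ → ℝ)
    (hη_inter : ∀ i, i + 1 < r → x (i + 1) ≤ η i ∧ η i ≤ x i)
    (hη_last : η (r - 1) = -∑ i ∈ Finset.range (r - 1), η i)
    (hη_bound : -(1 - 1 / (r : ℝ)) ≤ η (r - 1)) :
    ((k : ℝ) - 1) * lam (n * k - 1) + η (r - 1) * (lam 0 - lam (n * k - 1))
      ≤ (∑ j ∈ Finset.range r,
            x j * ∑ i ∈ Finset.range (k - 1), lam ((n - 1 - j) * k + 1 + i))
          + (∑ j ∈ Finset.range (r - 1), η j * lam ((n - 1 - j) * k))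
          + η (r - 1) * lam 0
    ∧ (((k : ℝ) - 1) / k) * (((k : ℝ) + 1) * lam (n * k - 1) - lam 0)
      ≤ ((k : ℝ) - 1) * lam (n * k - 1) + η (r - 1) * (lam 0 - lam (n * k - 1)) := by
  have hk0 : 0 < k := by omega
  have hnk1 : 1 ≤ n * k := Nat.one_le_iff_ne_zero.mpr (by positivity)
  set L := lam (n * k - 1) with hL
  have hmin : ∀ m, m ≤ n * k - 1 → L ≤ lam m := fun m hm =>
    hlam_mono m (n * k - 1) hm (by omega)
  have hrk : r ≤ k := by omega
  have hrn : r ≤ n := by omega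
  have hd : 0 ≤ lam 0 - L := by
    have := hmin 0 (by omega); linarith
  -- bound term1
  have h1 : ∑ j ∈ Finset.range r, x j * (((k : ℝ) - 1) * L)
      ≤ ∑ j ∈ Finset.range r,
          x j * ∑ i ∈ Finset.range (k - 1), lam ((n - 1 - j) * k + 1 + i) := by
    apply Finset.sum_le_sum
    intro j hj
    rw [Finset.mem_range] at hj
    apply mul_le_mul_of_nonneg_left _ (hx_pos j hj).le
    have : (((k : ℝ) - 1) * L) = ∑ _i ∈ Finset.range (k - 1), L := by
      rw [Finset.sum_const, Finset.card_range, nsmul_eq_mul]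
      have : ((k - 1 : ℕ) : ℝ) = (k : ℝ) - 1 := by
        rw [Nat.cast_sub hk0]; norm_num
      rw [this]
    rw [this]
    apply Finset.sum_le_sum
    intro i hi
    rw [Finset.mem_range] at hi
    apply hmin
    have hjn : n - 1 - j + 1 ≤ n := by omega
    have : (n - 1 - j) * k + 1 + i < (n - 1 - j + 1) * k := by
      rw [add_mul, one_mul]; omega
    have : (n - 1 - j + 1) * k ≤ n * k := Nat.mul_le_mul_right k hjn
    omega
  -- bound term2
  have h2 : ∑ j ∈ Finset.range (r - 1), η j * L
      ≤ ∑ j ∈ Finset.range (r - 1), η j * lam ((n - 1 - j) * k) := by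
    apply Finset.sum_le_sum
    intro j hj
    rw [Finset.mem_range] at hj
    have hηj : 0 ≤ η j := by
      have h := hη_inter j (by omega)
      have := hx_pos (j + 1) (by omega)
      linarith
    apply mul_le_mul_of_nonneg_left _ hηj
    apply hmin
    have : (n - 1 - j) * k < n * k := (Nat.mul_lt_mul_right hk0).mpr (by omega)
    omega
  have h1' : ∑ j ∈ Finset.range r, x j * (((k : ℝ) - 1) * L)
      = ((k : ℝ) - 1) * L := by
    rw [← Finset.sum_mul, hx_sum, one_mul]
  have h2' : ∑ j ∈ Finset.range (r - 1), η j * L = -η (r - 1) * L := by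
    rw [← Finset.sum_mul, ← neg_neg (∑ i ∈ Finset.range (r - 1), η i), ← hη_last]
  constructor
  · have key : ((k : ℝ) - 1) * L + (-η (r - 1) * L) + η (r - 1) * lam 0
        ≤ (∑ j ∈ Finset.range r,
            x j * ∑ i ∈ Finset.range (k - 1), lam ((n - 1 - j) * k + 1 + i))
          + (∑ j ∈ Finset.range (r - 1), η j * lam ((n - 1 - j) * k))
          + η (r - 1) * lam 0 := by
      rw [← h1', ← h2']; linarith [h1, h2]
    have : η (r - 1) * (lam 0 - L) = -η (r - 1) * L + η (r - 1) * lam 0 := by ring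
    linarith
  · have hr0 : (0 : ℝ) < r := by positivity
    have hkk : (0 : ℝ) < k := by positivity
    have hrle : (r : ℝ) ≤ k := by exact_mod_cast hrk
    have h1r : 1 / (k : ℝ) ≤ 1 / r := one_div_le_one_div_of_le hr0 hrle
    have hη : -(1 - 1 / (k : ℝ)) ≤ η (r - 1) := by linarith
    have hmul : -(1 - 1 / (k : ℝ)) * (lam 0 - L) ≤ η (r - 1) * (lam 0 - L) :=
      mul_le_mul_of_nonneg_right hη hd
    have heq : (((k : ℝ) - 1) / k) * (((k : ℝ) + 1) * L - lam 0)
        = ((k : ℝ) - 1) * L + (-(1 - 1 / (k : ℝ))) * (lam 0 - L) := by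
      field_simp; ring
    linarith
end
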